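/- arXiv:1709.10167 — 3 statements merged into one kernel-verified Lean document; each statement's English description precedes it below -/
import Mathlib

section
/- For coprime positive integers n and s with n,s ≥ 2, the number of positive integers that cannot be written as a·n + b·s with a, b nonnegative integers equals (n−1)(s−1)/2. -/
/-- Genus formula: for coprime `n, s ≥ 2`, the number of positive integers not
representable as `a*n + b*s` with `a, b : ℕ` equals `(n-1)*(s-1)/2`. -/
theorem gap_count (n s : ℕ) (hn : 2 ≤ n) (hs : 2 ≤ s) (h : Nat.Coprime n s) :
    {k : ℕ | 0 < k ∧ ¬ ∃ a b : ℕ, k = a * n + b * s}.ncard = (n - 1) * (s - 1) / 2 := by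
  classical
  have hn0 : 0 < n := by omega
  haveI : NeZero n := ⟨by omega⟩
  set R : ℕ → Prop := fun k => ∃ a b : ℕ, k = a * n + b * s with hRdef
  -- translate the Frobenius number statement
  have frob := frobeniusNumber_pair h hn hs
  rw [FrobeniusNumber] at frob
  obtain ⟨m, hm⟩ : ∃ m, n * s - n - s = m := ⟨_, rfl⟩
  rw [hm] at frob
  have hclos : ∀ k : ℕ, k ∈ AddSubmonoid.closure ({n, s} : Set ℕ) ↔ R k := by
    intro k
    rw [AddSubmonoid.mem_closure_pair]
    simp [hRdef, eq_comm, smul_eq_mul]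
  have hFnotR : ¬ R m := by
    have := frob.1
    rw [Set.mem_setOf_eq] at this
    exact fun hr => this ((hclos m).mpr hr)
  have hFub : ∀ k, ¬ R k → k ≤ m := by
    intro k hk
    exact frob.2 (by rw [Set.mem_setOf_eq, hclos]; exact hk)
  -- additivity of representability
  have hadd : ∀ a b, R a → R b → R (a + b) := by
    rintro a b ⟨a1, b1, rfl⟩ ⟨a2, b2, rfl⟩
    exact ⟨a1 + a2, b1 + b2, by ring⟩
  -- key: if b*s ≤ k and k ≡ b*s [MOD n] then R k
  have hrep : ∀ k b : ℕ, b * s ≤ k → k ≡ b * s [MOD n] → R k := by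
    intro k b hle hmod
    obtain ⟨c, hc⟩ := (Nat.modEq_iff_dvd' hle).mp hmod.symm
    refine ⟨c, b, ?_⟩
    have := Nat.sub_add_cancel hle
    rw [mul_comm c n, ← hc, this]
  -- key symmetry lemma: if k ≤ m and ¬ R k then R (m - k)
  have hsym : ∀ k, k ≤ m → ¬ R k → R (m - k) := by
    intro k hkm hk
    -- find b < n with b*s ≡ k mod n
    set x : ZMod n := (k : ZMod n) * (s : ZMod n)⁻¹ with hx
    set b : ℕ := x.val with hb
    have hbn : b < n := ZMod.val_lt x
    have hsu : IsUnit (s : ZMod n) := by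
      rw [ZMod.isUnit_iff_coprime]
      exact h.symm
    have hbs : (b : ZMod n) * (s : ZMod n) = (k : ZMod n) := by
      rw [hb, ZMod.natCast_val, ZMod.cast_id, hx, mul_assoc,
        ZMod.inv_mul_of_unit _ hsu, mul_one]
    have hmod : b * s ≡ k [MOD n] := by
      rw [← ZMod.natCast_eq_natCast_iff, Nat.cast_mul]
      exact hbs
    -- since ¬ R k, we must have k < b*s
    have hlt : k < b * s := by
      by_contra hle
      exact hk (hrep k b (by omega) hmod.symm)
    -- moreover b*s - k is a positive multiple of n
    obtain ⟨c, hc⟩ := (Nat.modEq_iff_dvd' hlt.le).mp hmod.symm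
    have hc1 : 1 ≤ c := by
      rcases Nat.eq_zero_or_pos c with h0 | h1
      · subst h0
        rw [Nat.mul_zero] at hc
        exact absurd (Nat.sub_eq_zero_iff_le.mp hc) (not_le.mpr hlt)
      · exact h1
    have hkn' : k + c * n = b * s := by
      rw [Nat.add_comm, mul_comm]
      rw [← hc]
      exact Nat.sub_add_cancel hlt.le
    have hcn' : n ≤ c * n := Nat.le_mul_of_pos_left n hc1
    have hbs' : b * s + s ≤ n * s := by
      calc b * s + s = (b + 1) * s := by ring
        _ ≤ n * s := Nat.mul_le_mul_right s hbn
    have hns : n + s ≤ n * s := Nat.add_le_mul hn hs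
    rw [← hm] at hkm
    refine ⟨c - 1, n - 1 - b, ?_⟩
    rw [← hm, Nat.sub_one_mul, Nat.sub_mul, Nat.sub_one_mul]
    generalize hA : n * s = A at hbs' hns hkm ⊢
    generalize hB : c * n = B at hkn' hcn' ⊢
    generalize hC : b * s = C at hbs' hkn' ⊢
    omega
  -- the gap set as a finset
  have hR0 : R 0 := ⟨0, 0, by ring⟩
  set T : Finset ℕ := Finset.range (m + 1) with hT
  have hmemT : ∀ k, k ∈ T ↔ k < m + 1 := fun k => Finset.mem_range
  have hset : {k : ℕ | 0 < k ∧ ¬ ∃ a b : ℕ, k = a * n + b * s}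
      = ↑(T.filter fun k => ¬ R k) := by
    ext k
    simp only [Set.mem_setOf_eq, Finset.coe_filter, hmemT, hRdef]
    constructor
    · rintro ⟨hk0, hk⟩
      exact ⟨Nat.lt_succ_of_le (hFub k hk), hk⟩
    · rintro ⟨hkm, hk⟩
      refine ⟨?_, hk⟩
      rcases Nat.eq_zero_or_pos k with rfl | h1
      · exact absurd hR0 hk
      · exact h1
  rw [hset, Set.ncard_coe_finset]
  -- the bijection k ↦ m - k between gaps and representables in [0, m]
  have hcard : (T.filter fun k => ¬ R k).card = (T.filter R).card := by
    refine Finset.card_nbij' (fun k => m - k) (fun k => m - k) ?_ ?_ ?_ ?_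
    · intro k hk
      simp only [Finset.mem_coe, Finset.mem_filter, hmemT] at hk ⊢
      exact ⟨by omega, hsym k (by omega) hk.2⟩
    · intro k hk
      simp only [Finset.mem_coe, Finset.mem_filter, hmemT] at hk ⊢
      refine ⟨by omega, fun hr => hFnotR ?_⟩
      have := hadd k (m - k) hk.2 hr
      rwa [Nat.add_sub_cancel' (by omega : k ≤ m)] at this
    · intro k hk
      simp only [Finset.mem_coe, Finset.mem_filter, hmemT] at hk
      show m - (m - k) = k
      omega
    · intro k hk
      simp only [Finset.mem_coe, Finset.mem_filter, hmemT] at hk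
      show m - (m - k) = k
      omega
  have hsum : (T.filter fun k => ¬ R k).card + (T.filter R).card = m + 1 := by
    rw [Nat.add_comm, Finset.card_filter_add_card_filter_not, hT,
      Finset.card_range]
  -- m + 1 = (n-1)*(s-1)
  have hm1 : m + 1 = (n - 1) * (s - 1) := by
    obtain ⟨n', rfl⟩ : ∃ n', n = n' + 1 := ⟨n - 1, by omega⟩
    obtain ⟨s', rfl⟩ : ∃ s', s = s' + 1 := ⟨s - 1, by omega⟩
    have hexp : (n' + 1) * (s' + 1) = n' * s' + n' + s' + 1 := by ring
    rw [← hm, hexp]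
    simp only [Nat.add_sub_cancel]
    have hn' : 1 ≤ n' := by omega
    have hs' : 1 ≤ s' := by omega
    have : 1 ≤ n' * s' := Nat.one_le_iff_ne_zero.mpr (by positivity)
    omega
  omega
end

section
/- Let n and s be coprime positive integers and let W = {w : w ∉ ⟨n,s⟩} be the set of positive integers not representable as nonnegative combinations of n and s. Then in the ring of formal power series ℚ[[t]], the identity ∑_{w∈W} t^w = 1/(1−t) − (1−t^{ns})/((1−t^n)(1−t^s)) holds. -/
open PowerSeries

open scoped Classical

private lemma gap_reduce (n s : ℕ) (hs : 0 < s) (k : ℕ)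
    (hk : ∃ a b : ℕ, k = a * n + b * s) :
    ∃ a b : ℕ, a < s ∧ k = a * n + b * s := by
  obtain ⟨a, b, rfl⟩ := hk
  refine ⟨a % s, b + (a / s) * n, Nat.mod_lt _ hs, ?_⟩
  have h1 : a % s + s * (a / s) = a := Nat.mod_add_div a s
  conv_lhs => rw [← h1]
  ring

private lemma gap_unique (n s : ℕ) (hn : 0 < n) (h : Nat.Coprime n s) {a a' c : ℕ}
    (ha : a < s) (hc : 0 < c) (heq : a * n = a' * n + c * s) : False := by
  have hs : 0 < s := by omega
  have h2 : a' < a := by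
    by_contra hle; push_neg at hle
    have := Nat.mul_le_mul_right n hle
    nlinarith
  have h3 : (a - a') * n = c * s := by
    rw [Nat.sub_mul]
    omega
  have h4 : s ∣ (a - a') * n := ⟨c, by rw [h3, mul_comm]⟩
  have h5 : s ∣ a - a' := h.symm.dvd_of_dvd_mul_right h4
  have := Nat.le_of_dvd (by omega) h5
  omega

private lemma gap_key (n s : ℕ) (hn : 0 < n) (hs : 0 < s) (h : Nat.Coprime n s) (k : ℕ) :
    ((if ∃ a b : ℕ, k = a * n + b * s then (1:ℚ) else 0)
      - if s ≤ k ∧ ∃ a b : ℕ, k - s = a * n + b * s then 1 else 0)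
    = if ∃ a, a < s ∧ k = a * n then 1 else 0 := by
  by_cases hR : ∃ a, a < s ∧ k = a * n
  · obtain ⟨a, has, rfl⟩ := hR
    have e1 : ∃ a' b : ℕ, a * n = a' * n + b * s := ⟨a, 0, by ring⟩
    have e3 : ∃ a', a' < s ∧ a * n = a' * n := ⟨a, has, rfl⟩
    have e2 : ¬ (s ≤ a * n ∧ ∃ a' b : ℕ, a * n - s = a' * n + b * s) := by
      rintro ⟨hsk, hmem⟩
      obtain ⟨a', b', ha', heq⟩ := gap_reduce n s hs _ hmem
      have heq' : a * n = a' * n + (b' + 1) * s := by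
        have : (b' + 1) * s = b' * s + s := by ring
        omega
      exact gap_unique n s hn h has (Nat.succ_pos b') heq'
    rw [if_pos e1, if_pos e3, if_neg e2, sub_zero]
  · rw [if_neg hR]
    by_cases hmem : ∃ a b : ℕ, k = a * n + b * s
    · obtain ⟨a, b, ha, heq⟩ := gap_reduce n s hs _ hmem
      obtain ⟨b', rfl⟩ : ∃ b', b = b' + 1 := by
        refine ⟨b - 1, ?_⟩
        rcases Nat.eq_zero_or_pos b with h0 | h0
        · subst h0; exact absurd ⟨a, ha, by simpa using heq⟩ hR
        · omega
      have hbs : (b' + 1) * s = b' * s + s := by ring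
      have e2 : s ≤ k ∧ ∃ a' b'' : ℕ, k - s = a' * n + b'' * s :=
        ⟨by omega, a, b', by omega⟩
      rw [if_pos hmem, if_pos e2, sub_self]
    · have e2 : ¬ (s ≤ k ∧ ∃ a b : ℕ, k - s = a * n + b * s) := by
        rintro ⟨hsk, a, b, heq⟩
        have hbs : (b + 1) * s = b * s + s := by ring
        exact hmem ⟨a, b + 1, by omega⟩
      rw [if_neg hmem, if_neg e2, sub_zero]

/-- Generating function of the Weierstrass gaps of the numerical semigroup `⟨n,s⟩`:
`∑_{w ∈ W} t^w = 1/(1-t) - (1-t^{ns})/((1-t^n)(1-t^s))` in `ℚ[[t]]`. -/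
theorem gap_generating_function (n s : ℕ) (hn : 0 < n) (hs : 0 < s)
    (h : Nat.Coprime n s)
    (W : Set ℕ) (hW : W = {w : ℕ | 0 < w ∧ ¬ ∃ a b : ℕ, w = a * n + b * s})
    (hfin : W.Finite) :
    ∑ w ∈ hfin.toFinset, (PowerSeries.X : PowerSeries ℚ) ^ w =
      (1 - PowerSeries.X)⁻¹ -
        (1 - PowerSeries.X ^ (n * s)) *
          ((1 - PowerSeries.X ^ n) * (1 - PowerSeries.X ^ s))⁻¹ := by
  set G : PowerSeries ℚ :=
    PowerSeries.mk (fun k => if ∃ a b : ℕ, k = a * n + b * s then (1:ℚ) else 0) with hG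
  -- Step 1: G * (1 - X^s) = ∑_{a < s} X^(a*n)
  have hGs : G * (1 - X ^ s) = ∑ a ∈ Finset.range s, (X : PowerSeries ℚ) ^ (a * n) := by
    ext k
    rw [mul_sub, mul_one, map_sub, coeff_mul_X_pow', hG, coeff_mk, map_sum]
    have hsum : ∑ a ∈ Finset.range s, (coeff k) ((X : PowerSeries ℚ) ^ (a * n))
        = if ∃ a, a < s ∧ k = a * n then 1 else 0 := by
      simp_rw [coeff_X_pow]
      by_cases hex : ∃ a, a < s ∧ k = a * n
      · obtain ⟨a, has, rfl⟩ := hex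
        rw [if_pos ⟨a, has, rfl⟩, Finset.sum_eq_single a]
        · simp
        · intro a' ha' hne
          rw [if_neg]
          intro heq
          exact hne (Nat.eq_of_mul_eq_mul_right hn heq.symm)
        · intro habs; exact absurd (Finset.mem_range.mpr has) habs
      · rw [if_neg hex, Finset.sum_eq_zero]
        intro a ha
        rw [if_neg]
        intro heq
        exact hex ⟨a, Finset.mem_range.mp ha, heq⟩
    have h2 : (if s ≤ k then (coeff (k - s)) (mk fun k =>
          if ∃ a b : ℕ, k = a * n + b * s then (1:ℚ) else 0) else 0)
        = if s ≤ k ∧ ∃ a b : ℕ, k - s = a * n + b * s then (1:ℚ) else 0 := by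
      rw [coeff_mk]
      by_cases hsk : s ≤ k
      · rw [if_pos hsk]
        by_cases hq : ∃ a b : ℕ, k - s = a * n + b * s
        · rw [if_pos hq, if_pos ⟨hsk, hq⟩]
        · rw [if_neg hq, if_neg (fun hc => hq hc.2)]
      · rw [if_neg hsk, if_neg (fun hc => hsk hc.1)]
    rw [hsum, h2]
    exact gap_key n s hn hs h k
  -- Step 2: the geometric sum identity
  have hP : (∑ a ∈ Finset.range s, (X : PowerSeries ℚ) ^ (a * n)) * (1 - X ^ n)
      = 1 - X ^ (n * s) := by
    have hgs := geom_sum_mul ((X : PowerSeries ℚ) ^ n) s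
    simp_rw [show ∀ a : ℕ, a * n = n * a from fun a => mul_comm a n, pow_mul]
    linear_combination -hgs
  -- Step 3: G * ((1-X^n)(1-X^s)) = 1 - X^(n*s)
  have hGA : G * ((1 - X ^ n) * (1 - X ^ s)) = 1 - X ^ (n * s) := by
    calc G * ((1 - X ^ n) * (1 - X ^ s))
        = (G * (1 - X ^ s)) * (1 - X ^ n) := by ring
      _ = 1 - X ^ (n * s) := by rw [hGs, hP]
  -- Step 4: invert
  have hA : constantCoeff (R := ℚ) ((1 - X ^ n) * (1 - X ^ s)) ≠ 0 := by
    simp [zero_pow hn.ne', zero_pow hs.ne']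
  have hinv : (1 - X ^ (n * s)) * ((1 - (X : PowerSeries ℚ) ^ n) * (1 - X ^ s))⁻¹ = G := by
    rw [← hGA, mul_assoc, PowerSeries.mul_inv_cancel _ hA, mul_one]
  have hone : ((1 : PowerSeries ℚ) - X)⁻¹ = PowerSeries.mk 1 := by
    have h1 : constantCoeff (R := ℚ) ((1 : PowerSeries ℚ) - X) ≠ 0 := by simp
    have h2 := mk_one_mul_one_sub_eq_one (S := ℚ)
    calc ((1 : PowerSeries ℚ) - X)⁻¹ = 1 * (1 - X)⁻¹ := by rw [one_mul]
      _ = (PowerSeries.mk 1 * (1 - X)) * (1 - X)⁻¹ := by rw [h2]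
      _ = PowerSeries.mk 1 * ((1 - X) * (1 - X)⁻¹) := by ring
      _ = PowerSeries.mk 1 := by rw [PowerSeries.mul_inv_cancel _ h1, mul_one]
  rw [hinv, hone]
  -- Step 5: the sum over gaps is mk 1 - G
  ext k
  rw [map_sub, hG, coeff_mk, coeff_mk, map_sum]
  simp_rw [coeff_X_pow]
  rw [Finset.sum_ite_eq]
  have hWk : k ∈ hfin.toFinset ↔ 0 < k ∧ ¬ ∃ a b : ℕ, k = a * n + b * s := by
    rw [Set.Finite.mem_toFinset, hW]; rfl
  by_cases hmem : ∃ a b : ℕ, k = a * n + b * s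
  · rw [if_neg (fun hk => ((hWk.mp hk).2 hmem)), if_pos hmem, Pi.one_apply, sub_self]
  · have hk0 : 0 < k := by
      rcases Nat.eq_zero_or_pos k with h0 | h0
      · exact absurd ⟨0, 0, by omega⟩ hmem
      · exact h0
    rw [if_pos (hWk.mpr ⟨hk0, hmem⟩), if_neg hmem, Pi.one_apply, sub_zero]
end

section
/- Let λ₂, λ₅, λ₆, λ₈, λ₉, λ₁₂ be elements of a field K of characteristic 0, and let f(x,y) = y³ + x⁴ + λ₂yx² + λ₅yx + λ₆x² + λ₈y + λ₉x + λ₁₂. In the field of formal Laurent series K((ξ)), there exists a unique series y(ξ) of the form y(ξ) = ξ⁻⁴(−1 + ∑_{i≥1} μᵢξⁱ) with μᵢ ∈ K such that f(−ξ⁻³, y(ξ)) = 0; moreover μ₁ = 0, μ₂ = λ₂/3, μ₃ = μ₄ = 0, and μ₅ = −λ₅/3. -/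
set_option maxHeartbeats 2000000

/-- The defining polynomial of the (3,4)-curve. -/
def f34 {R : Type*} [CommRing R] (l2 l5 l6 l8 l9 l12 x y : R) : R :=
  y ^ 3 + x ^ 4 + l2 * y * x ^ 2 + l5 * y * x + l6 * x ^ 2 + l8 * y + l9 * x + l12

/-- The Laurent series `ξ⁻⁴ · (-1 + ∑_{i ≥ 1} μᵢ ξⁱ)`. -/
noncomputable def yser (K : Type*) [Field K] (μ : ℕ → K) : LaurentSeries K :=
  HahnSeries.single (-4 : ℤ) (1 : K) *
    HahnSeries.ofPowerSeries ℤ K (PowerSeries.mk fun i => if i = 0 then (-1 : K) else μ i)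

namespace Param34Aux

open PowerSeries

variable {K : Type*} [Field K]

lemma mem_span_X_pow {n : ℕ} {φ : K⟦X⟧} :
    φ ∈ (Ideal.span {(X : K⟦X⟧)}) ^ n ↔ ∀ i < n, coeff i φ = 0 := by
  rw [Ideal.span_singleton_pow, Ideal.mem_span_singleton, PowerSeries.X_pow_dvd_iff]

instance psHaus : IsHausdorff (Ideal.span {(X : K⟦X⟧)}) K⟦X⟧ := by
  constructor
  intro x hx
  ext n
  have := hx (n + 1)
  rw [SModEq.zero, ← Ideal.one_eq_top, Ideal.smul_eq_mul, mul_one, mem_span_X_pow] at this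
  simpa using this n (Nat.lt_succ_self n)

instance psPre : IsPrecomplete (Ideal.span {(X : K⟦X⟧)}) K⟦X⟧ := by
  constructor
  intro f hf
  refine ⟨PowerSeries.mk fun n => coeff n (f (n + 1)), fun n => ?_⟩
  rw [SModEq.sub_mem, ← Ideal.one_eq_top, Ideal.smul_eq_mul, mul_one, mem_span_X_pow]
  intro i hi
  have h := hf (Nat.succ_le_of_lt hi)
  rw [SModEq.sub_mem, ← Ideal.one_eq_top, Ideal.smul_eq_mul, mul_one, mem_span_X_pow] at h
  have := h i (Nat.lt_succ_self i)
  simp only [map_sub, coeff_mk, sub_eq_zero] at this ⊢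
  exact this.symm

instance psAdic : IsAdicComplete (Ideal.span {(X : K⟦X⟧)}) K⟦X⟧ := ⟨⟩

lemma root_unique [CharZero K] (A : K⟦X⟧) (hA : constantCoeff A = 0) (P P' : K⟦X⟧)
    (h : P ^ 3 + A * P = P' ^ 3 + A * P')
    (hP : constantCoeff P = -1) (hP' : constantCoeff P' = -1) : P = P' := by
  have key : (P - P') * (P ^ 2 + P * P' + P' ^ 2 + A) = 0 := by linear_combination h
  rcases mul_eq_zero.mp key with h0 | h0
  · exact sub_eq_zero.mp h0
  · exfalso
    have := congrArg (constantCoeff) h0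
    simp [map_add, map_mul, map_pow, hP, hP', hA] at this
    norm_num at this

lemma root_exists [CharZero K] (A B : K⟦X⟧) (hA : constantCoeff A = 0)
    (hB : constantCoeff B = 0) :
    ∃ P : K⟦X⟧, constantCoeff P = -1 ∧ P ^ 3 + 1 + A * P + B = 0 := by
  have hh := (IsAdicComplete.henselianRing K⟦X⟧ (Ideal.span {X})).is_henselian
  set f : Polynomial K⟦X⟧ :=
    Polynomial.X ^ 3 + (Polynomial.C A * Polynomial.X + Polynomial.C (1 + B)) with hf
  have hmonic : f.Monic := by
    apply Polynomial.monic_X_pow_add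
    have h1 : (Polynomial.C A * Polynomial.X : Polynomial K⟦X⟧).degree ≤ 1 := by
      simpa using Polynomial.degree_C_mul_X_le A
    have h2 : (Polynomial.C (1 + B) : Polynomial K⟦X⟧).degree ≤ 0 := Polynomial.degree_C_le
    refine lt_of_le_of_lt (Polynomial.degree_add_le _ _) ?_
    rw [max_lt_iff]
    exact ⟨lt_of_le_of_lt h1 (by norm_num), lt_of_le_of_lt h2 (by norm_num)⟩
  have heval : f.eval (-1) ∈ Ideal.span {(X : K⟦X⟧)} := by
    rw [Ideal.mem_span_singleton, PowerSeries.X_dvd_iff]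
    simp [hf, hA, hB]
    norm_num
  have hderiv : IsUnit ((Ideal.Quotient.mk (Ideal.span {(X : K⟦X⟧)}))
      (f.derivative.eval (-1))) := by
    have : f.derivative.eval (-1 : K⟦X⟧) = 3 + A := by
      simp [hf, Polynomial.derivative_X_pow]
      norm_num
    rw [this]
    refine IsUnit.map _ ?_
    rw [PowerSeries.isUnit_iff_constantCoeff, map_add, hA, add_zero, map_ofNat]
    norm_num
  obtain ⟨a, ha1, ha2⟩ := hh f hmonic (-1) heval hderiv
  refine ⟨a, ?_, ?_⟩
  · rw [Ideal.mem_span_singleton, PowerSeries.X_dvd_iff, map_sub] at ha2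
    simp at ha2
    linear_combination ha2
  · have := ha1
    simp only [Polynomial.IsRoot, hf, Polynomial.eval_add, Polynomial.eval_pow,
      Polynomial.eval_mul, Polynomial.eval_X, Polynomial.eval_C] at this
    linear_combination this

lemma bridge (l2 l5 l6 l8 l9 l12 : K) (p : K⟦X⟧) :
    HahnSeries.single (12 : ℤ) (1 : K) *
    f34 ((algebraMap K (LaurentSeries K)) l2) ((algebraMap K (LaurentSeries K)) l5)
      ((algebraMap K (LaurentSeries K)) l6) ((algebraMap K (LaurentSeries K)) l8)
      ((algebraMap K (LaurentSeries K)) l9) ((algebraMap K (LaurentSeries K)) l12)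
      (-(HahnSeries.single (-3 : ℤ) (1 : K)))
      (HahnSeries.single (-4 : ℤ) (1 : K) * HahnSeries.ofPowerSeries ℤ K p) =
      HahnSeries.ofPowerSeries ℤ K (p ^ 3 + 1 +
        (C l2 * X ^ 2 - C l5 * X ^ 5 + C l8 * X ^ 8) * p +
        (C l6 * X ^ 6 - C l9 * X ^ 9 + C l12 * X ^ 12)) := by
  have hC : ∀ c : K,
      (algebraMap K (LaurentSeries K)) c = HahnSeries.ofPowerSeries ℤ K (C c) := by
    intro c
    simp [HahnSeries.algebraMap_apply', PowerSeries.algebraMap_apply]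
  set u : LaurentSeries K := HahnSeries.single (1 : ℤ) (1 : K) with hu
  set v : LaurentSeries K := HahnSeries.single (-1 : ℤ) (1 : K) with hv
  have huv : u * v = 1 := by
    rw [hu, hv, HahnSeries.single_mul_single]
    norm_num [HahnSeries.single_zero_one]
  have h12 : HahnSeries.single (12 : ℤ) (1 : K) = u ^ 12 := by
    rw [hu, HahnSeries.single_pow]; norm_num
  have h3 : HahnSeries.single (-3 : ℤ) (1 : K) = v ^ 3 := by
    rw [hv, HahnSeries.single_pow]; norm_num
  have h4 : HahnSeries.single (-4 : ℤ) (1 : K) = v ^ 4 := by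
    rw [hv, HahnSeries.single_pow]; norm_num
  have hX : HahnSeries.ofPowerSeries ℤ K X = u := HahnSeries.ofPowerSeries_X
  rw [f34, h3, h4, h12]
  simp only [map_add, map_mul, map_pow, map_sub, map_one, hX, ← hC]
  generalize (algebraMap K (LaurentSeries K)) l2 = c2
  generalize (algebraMap K (LaurentSeries K)) l5 = c5
  generalize (algebraMap K (LaurentSeries K)) l6 = c6
  generalize (algebraMap K (LaurentSeries K)) l8 = c8
  generalize (algebraMap K (LaurentSeries K)) l9 = c9
  generalize (algebraMap K (LaurentSeries K)) l12 = c12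
  generalize (HahnSeries.ofPowerSeries ℤ K) p = q
  linear_combination ((q^3+1) * (1 + (u*v) + (u*v)^2 + (u*v)^3 + (u*v)^4 + (u*v)^5 + (u*v)^6 + (u*v)^7 + (u*v)^8 + (u*v)^9 + (u*v)^10 + (u*v)^11) + c2 * q * u^2 * (1 + (u*v) + (u*v)^2 + (u*v)^3 + (u*v)^4 + (u*v)^5 + (u*v)^6 + (u*v)^7 + (u*v)^8 + (u*v)^9) - c5 * q * u^5 * (1 + (u*v) + (u*v)^2 + (u*v)^3 + (u*v)^4 + (u*v)^5 + (u*v)^6) + c6 * u^6 * (1 + (u*v) + (u*v)^2 + (u*v)^3 + (u*v)^4 + (u*v)^5) + c8 * q * u^8 * (1 + (u*v) + (u*v)^2 + (u*v)^3) - c9 * u^9 * (1 + (u*v) + (u*v)^2)) * huv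

lemma f34_eq_zero_iff (l2 l5 l6 l8 l9 l12 : K) (p : K⟦X⟧) :
    f34 ((algebraMap K (LaurentSeries K)) l2) ((algebraMap K (LaurentSeries K)) l5)
      ((algebraMap K (LaurentSeries K)) l6) ((algebraMap K (LaurentSeries K)) l8)
      ((algebraMap K (LaurentSeries K)) l9) ((algebraMap K (LaurentSeries K)) l12)
      (-(HahnSeries.single (-3 : ℤ) (1 : K)))
      (HahnSeries.single (-4 : ℤ) (1 : K) * HahnSeries.ofPowerSeries ℤ K p) = 0 ↔
    p ^ 3 + 1 + (C l2 * X ^ 2 - C l5 * X ^ 5 + C l8 * X ^ 8) * p +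
      (C l6 * X ^ 6 - C l9 * X ^ 9 + C l12 * X ^ 12) = 0 := by
  have hne : (HahnSeries.single (12 : ℤ) (1 : K)) ≠ 0 :=
    HahnSeries.single_ne_zero one_ne_zero
  constructor
  · intro h
    apply HahnSeries.ofPowerSeries_injective (Γ := ℤ)
    rw [map_zero, ← bridge, h, mul_zero]
  · intro h
    have hb := bridge l2 l5 l6 l8 l9 l12 p
    rw [h, map_zero] at hb
    exact (mul_eq_zero.mp hb).resolve_left hne

lemma coeffs [CharZero K] (l2 l5 l6 l8 l9 l12 : K) (μ : ℕ → K) (h0 : μ 0 = 0)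
    (h : (PowerSeries.mk fun i => if i = 0 then (-1 : K) else μ i) ^ 3 + 1 +
      (C l2 * X ^ 2 - C l5 * X ^ 5 + C l8 * X ^ 8) *
        (PowerSeries.mk fun i => if i = 0 then (-1 : K) else μ i) +
      (C l6 * X ^ 6 - C l9 * X ^ 9 + C l12 * X ^ 12) = 0) :
    μ 1 = 0 ∧ μ 2 = l2 / 3 ∧ μ 3 = 0 ∧ μ 4 = 0 ∧ μ 5 = -l5 / 3 := by
  set P : K⟦X⟧ := PowerSeries.mk fun i => if i = 0 then (-1 : K) else μ i with hP
  have h' : P * (P * P) + 1 + C l2 * (X ^ 2 * P) - C l5 * (X ^ 5 * P) + C l8 * (X ^ 8 * P)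
      + C l6 * X ^ 6 - C l9 * X ^ 9 + C l12 * X ^ 12 = 0 := by
    rw [← h]; ring
  have key : ∀ n : ℕ, (coeff n) (P * (P * P)) + (coeff n) (1 : K⟦X⟧)
      + l2 * (if 2 ≤ n then coeff (n - 2) P else 0)
      - l5 * (if 5 ≤ n then coeff (n - 5) P else 0)
      + l8 * (if 8 ≤ n then coeff (n - 8) P else 0)
      + l6 * (coeff n (X ^ 6 : K⟦X⟧)) - l9 * (coeff n (X ^ 9 : K⟦X⟧))
      + l12 * (coeff n (X ^ 12 : K⟦X⟧)) = 0 := by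
    intro n
    have := congrArg (coeff n) h'
    simpa only [map_add, map_sub, map_zero, coeff_C_mul, coeff_X_pow_mul'] using this
  have e1 := key 1
  simp only [PowerSeries.coeff_mul, Finset.Nat.sum_antidiagonal_eq_sum_range_succ_mk,
    Finset.sum_range_succ, Finset.sum_range_zero, hP, coeff_mk, coeff_one, coeff_X_pow] at e1
  norm_num [h0] at e1
  have m1 : μ 1 = 0 := by linear_combination e1 / 3
  have e2 := key 2
  simp only [PowerSeries.coeff_mul, Finset.Nat.sum_antidiagonal_eq_sum_range_succ_mk,
    Finset.sum_range_succ, Finset.sum_range_zero, hP, coeff_mk, coeff_one, coeff_X_pow] at e2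
  norm_num [h0, m1] at e2
  have m2 : μ 2 = l2 / 3 := by linear_combination e2 / 3
  have e3 := key 3
  simp only [PowerSeries.coeff_mul, Finset.Nat.sum_antidiagonal_eq_sum_range_succ_mk,
    Finset.sum_range_succ, Finset.sum_range_zero, hP, coeff_mk, coeff_one, coeff_X_pow] at e3
  norm_num [h0, m1, m2] at e3
  have m3 : μ 3 = 0 := by linear_combination e3 / 3
  have e4 := key 4
  simp only [PowerSeries.coeff_mul, Finset.Nat.sum_antidiagonal_eq_sum_range_succ_mk,
    Finset.sum_range_succ, Finset.sum_range_zero, hP, coeff_mk, coeff_one, coeff_X_pow] at e4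
  norm_num [h0, m1, m2, m3] at e4
  have m4 : μ 4 = 0 := by linear_combination e4 / 3
  have e5 := key 5
  simp only [PowerSeries.coeff_mul, Finset.Nat.sum_antidiagonal_eq_sum_range_succ_mk,
    Finset.sum_range_succ, Finset.sum_range_zero, hP, coeff_mk, coeff_one, coeff_X_pow] at e5
  norm_num [h0, m1, m2, m3, m4] at e5
  have m5 : μ 5 = -l5 / 3 := by linear_combination e5 / 3
  exact ⟨m1, m2, m3, m4, m5⟩

end Param34Aux

open PowerSeries Param34Aux in
/-- Local parameterization of the (3,4)-curve at infinity: there is a unique Laurent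
series `y(ξ) = ξ⁻⁴(-1 + ∑_{i≥1} μᵢ ξⁱ)` with `f(-ξ⁻³, y(ξ)) = 0`, and its first
coefficients are `μ₁ = 0`, `μ₂ = λ₂/3`, `μ₃ = μ₄ = 0`, `μ₅ = -λ₅/3`. -/
theorem param_34 (K : Type*) [Field K] [CharZero K] (l2 l5 l6 l8 l9 l12 : K) :
    (∃! μ : ℕ → K, μ 0 = 0 ∧
        f34 ((algebraMap K (LaurentSeries K)) l2) ((algebraMap K (LaurentSeries K)) l5)
          ((algebraMap K (LaurentSeries K)) l6) ((algebraMap K (LaurentSeries K)) l8)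
          ((algebraMap K (LaurentSeries K)) l9) ((algebraMap K (LaurentSeries K)) l12)
          (-(HahnSeries.single (-3 : ℤ) (1 : K))) (yser K μ) = 0) ∧
      ∀ μ : ℕ → K, μ 0 = 0 →
        f34 ((algebraMap K (LaurentSeries K)) l2) ((algebraMap K (LaurentSeries K)) l5)
          ((algebraMap K (LaurentSeries K)) l6) ((algebraMap K (LaurentSeries K)) l8)
          ((algebraMap K (LaurentSeries K)) l9) ((algebraMap K (LaurentSeries K)) l12)
          (-(HahnSeries.single (-3 : ℤ) (1 : K))) (yser K μ) = 0 →
        μ 1 = 0 ∧ μ 2 = l2 / 3 ∧ μ 3 = 0 ∧ μ 4 = 0 ∧ μ 5 = -l5 / 3 := by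
  set A : K⟦X⟧ := C l2 * X ^ 2 - C l5 * X ^ 5 + C l8 * X ^ 8 with hA
  set B : K⟦X⟧ := C l6 * X ^ 6 - C l9 * X ^ 9 + C l12 * X ^ 12 with hB
  have hA0 : constantCoeff A = 0 := by
    simp [hA]
  have hB0 : constantCoeff B = 0 := by
    simp [hB]
  have hiff : ∀ μ : ℕ → K,
      (f34 ((algebraMap K (LaurentSeries K)) l2) ((algebraMap K (LaurentSeries K)) l5)
        ((algebraMap K (LaurentSeries K)) l6) ((algebraMap K (LaurentSeries K)) l8)
        ((algebraMap K (LaurentSeries K)) l9) ((algebraMap K (LaurentSeries K)) l12)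
        (-(HahnSeries.single (-3 : ℤ) (1 : K))) (yser K μ) = 0 ↔
      (PowerSeries.mk fun i => if i = 0 then (-1 : K) else μ i) ^ 3 + 1 +
        A * (PowerSeries.mk fun i => if i = 0 then (-1 : K) else μ i) + B = 0) := by
    intro μ
    exact f34_eq_zero_iff l2 l5 l6 l8 l9 l12 _
  have hconst : ∀ μ : ℕ → K,
      constantCoeff (PowerSeries.mk fun i => if i = 0 then (-1 : K) else μ i) = -1 := by
    intro μ
    simp [← coeff_zero_eq_constantCoeff_apply, coeff_mk]
  constructor
  · obtain ⟨P, hPc, hProot⟩ := root_exists A B hA0 hB0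
    set μ₀ : ℕ → K := fun n => if n = 0 then 0 else coeff n P with hμ₀
    have hPμ₀ : (PowerSeries.mk fun i => if i = 0 then (-1 : K) else μ₀ i) = P := by
      ext n
      cases n with
      | zero =>
        simp [coeff_mk, coeff_zero_eq_constantCoeff_apply, hPc]
      | succ m =>
        simp only [coeff_mk, hμ₀, Nat.succ_ne_zero, if_false]
    refine ⟨μ₀, ⟨by simp [hμ₀], ?_⟩, ?_⟩
    · rw [hiff, hPμ₀]
      exact hProot
    · rintro μ ⟨hμ0, hμeq⟩
      rw [hiff] at hμeq
      have hPeq : (PowerSeries.mk fun i => if i = 0 then (-1 : K) else μ i) = P := by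
        apply root_unique A hA0 _ _ _ (hconst μ) hPc
        linear_combination hμeq - hProot
      funext n
      cases n with
      | zero => simp [hμ0, hμ₀]
      | succ m =>
        have := congrArg (coeff (m + 1)) hPeq
        simp only [coeff_mk, Nat.succ_ne_zero, if_false] at this
        simp only [hμ₀, Nat.succ_ne_zero, if_false]
        exact this
  · intro μ hμ0 hμeq
    rw [hiff] at hμeq
    exact coeffs l2 l5 l6 l8 l9 l12 μ hμ0 hμeq
end
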